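/- Variance difference with misspecified propensity score: let Ψ₁ = D(Y-m₁(X))/p(X) - (1-D)(Y-m₀(X))/(1-p(X)) + m₁(X) - m₀(X) and Ψ₂ the same with p(X) replaced by a misspecified p̃(X) ∈ (ε,1-ε). Then, under unconfoundedness and square integrability, E[Ψ₂²|X] - E[Ψ₁²|X] = ((p(X)² - p̃(X)²)/(p̃(X)² p(X)))·Var(Y|X,D=1) + (((1-p(X))² - (1-p̃(X))²)/((1-p̃(X))²(1-p(X))))·Var(Y|X,D=0). -/

import Mathlib

open MeasureTheory ProbabilityTheory Filter

section VarDiffAuxSection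

variable {Ω : Type*} {mΩ : MeasurableSpace Ω} {μ : Measure Ω}


variable {Ω : Type*} {mΩ : MeasurableSpace Ω} {μ : Measure Ω}

lemma int_mul {f g : Ω → ℝ} (hf : MemLp f 2 μ) (hg : MemLp g 2 μ) :
    Integrable (fun ω => f ω * g ω) μ := by
  have h := hf.smul (φ := g) hg (p := 2) (q := 2) (r := 1) (hpqr := ⟨by simp [ENNReal.inv_two_add_inv_two]⟩)
  rw [memLp_one_iff_integrable] at h
  exact (by simpa [Pi.smul_apply, smul_eq_mul, mul_comm] using h : Integrable (f * g) μ)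

/-- conditional Cauchy–Schwarz type argument: the conditional mean ratio is in L². -/
lemma memL2_ratio [IsProbabilityMeasure μ] {m : MeasurableSpace Ω} (hle : m ≤ mΩ)
    {W Y pX m1 : Ω → ℝ}
    (hW : Measurable[mΩ] W) (hW01 : ∀ ω, W ω = 0 ∨ W ω = 1)
    (hYm : Measurable[mΩ] Y) (hY2 : MemLp Y 2 μ)
    (hm1meas : StronglyMeasurable[m] m1)
    (hpX : pX =ᵐ[μ] μ[W | m])
    {ε : ℝ} (hε : 0 < ε) (hpb : ∀ ω, ε ≤ pX ω)
    (hm1 : μ[fun ω => W ω * Y ω | m] =ᵐ[μ] fun ω => pX ω * m1 ω) :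
    MemLp m1 2 μ := by
  have hWb : ∀ ω, 0 ≤ W ω ∧ W ω ≤ 1 := by
    intro ω; rcases hW01 ω with h | h <;> simp [h]
  have hWbdd : ∃ C, ∀ x, ‖W x‖ ≤ C :=
    ⟨1, fun x => by rw [Real.norm_eq_abs, abs_le]; constructor <;> nlinarith [hWb x]⟩
  have hYsqint : Integrable (fun ω => Y ω ^ 2) μ :=
    (memLp_two_iff_integrable_sq hY2.aestronglyMeasurable).mp hY2
  have hYint : Integrable Y μ := hY2.integrable one_le_two
  have hWY2 : Integrable (fun ω => W ω * Y ω ^ 2) μ :=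
    hYsqint.bdd_mul (hW.aestronglyMeasurable (μ := μ)) (ae_of_all _ hWbdd.choose_spec)
  have hWY : Integrable (fun ω => W ω * Y ω) μ :=
    hYint.bdd_mul (hW.aestronglyMeasurable (μ := μ)) (ae_of_all _ hWbdd.choose_spec)
  have hWint : Integrable W μ := (integrable_const (1:ℝ)).bdd_mul (hW.aestronglyMeasurable (μ := μ)) (ae_of_all _ hWbdd.choose_spec)
    |>.congr (by filter_upwards with ω; ring_nf)
  set A := μ[fun ω => W ω * Y ω ^ 2 | m] with hA
  set B := μ[fun ω => W ω * Y ω | m] with hB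
  set C := μ[W | m] with hC
  -- quadratic nonnegativity for every real t, a.e.
  have hquad : ∀ t : ℝ, ∀ᵐ ω ∂μ, 0 ≤ A ω - 2 * t * B ω + t ^ 2 * C ω := by
    intro t
    have hdec : (fun ω => W ω * (Y ω - t) ^ 2)
        = (fun ω => W ω * Y ω ^ 2) + ((-(2*t)) • fun ω => W ω * Y ω) + ((t^2) • W) := by
      funext ω; simp [Pi.add_apply, Pi.smul_apply, smul_eq_mul]; ring
    have h1 : μ[fun ω => W ω * (Y ω - t) ^ 2 | m]
        =ᵐ[μ] A + ((-(2*t)) • B) + ((t^2) • C) := by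
      rw [hdec]
      refine (condExp_add (hWY2.add (hWY.smul _)) (hWint.smul _) _).trans ?_
      exact Filter.EventuallyEq.add
        ((condExp_add hWY2 (hWY.smul _) _).trans
          (Filter.EventuallyEq.add Filter.EventuallyEq.rfl (condExp_smul _ _ _)))
        (condExp_smul _ _ _)
    have h2 : 0 ≤ᵐ[μ] μ[fun ω => W ω * (Y ω - t) ^ 2 | m] :=
      condExp_nonneg (Filter.Eventually.of_forall fun ω =>
        mul_nonneg (hWb ω).1 (sq_nonneg _))
    filter_upwards [h1, h2] with ω e1 e2
    have h3 := e2.trans_eq e1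
    simp only [Pi.add_apply, Pi.smul_apply, smul_eq_mul, Pi.zero_apply] at h3
    nlinarith [h3]
  have hquadQ : ∀ᵐ ω ∂μ, ∀ q : ℚ, 0 ≤ A ω - 2 * (q:ℝ) * B ω + (q:ℝ) ^ 2 * C ω :=
    ae_all_iff.mpr fun q => hquad q
  have hAnn : 0 ≤ᵐ[μ] A :=
    condExp_nonneg (Filter.Eventually.of_forall fun ω => mul_nonneg (hWb ω).1 (sq_nonneg _))
  -- pointwise bound m1^2 ≤ A/ε a.e.
  have hbound : ∀ᵐ ω ∂μ, m1 ω ^ 2 ≤ A ω / ε := by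
    filter_upwards [hquadQ, hpX, hm1, hAnn] with ω hq hp hm hA0
    have hall : ∀ t : ℝ, 0 ≤ A ω - 2 * t * B ω + t ^ 2 * C ω := by
      have hcl : IsClosed {t : ℝ | 0 ≤ A ω - 2 * t * B ω + t ^ 2 * C ω} :=
        isClosed_le continuous_const (by continuity)
      have hsub : Set.range ((↑) : ℚ → ℝ) ⊆ {t : ℝ | 0 ≤ A ω - 2 * t * B ω + t ^ 2 * C ω} := by
        rintro _ ⟨q, rfl⟩; exact hq q
      intro t
      have := closure_minimal hsub hcl
      have ht : t ∈ closure (Set.range ((↑) : ℚ → ℝ)) := by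
        rw [Rat.denseRange_cast.closure_eq]; trivial
      exact this ht
    have hCε : ε ≤ C ω := hp ▸ hpb ω
    have hBm : B ω = C ω * m1 ω := by rw [← hp]; exact hm
    have := hall (m1 ω)
    rw [hBm] at this
    have h1 : m1 ω ^ 2 * C ω ≤ A ω := by nlinarith
    rw [le_div_iff₀ hε]
    nlinarith
  have hm1sm : AEStronglyMeasurable[mΩ] m1 μ := (hm1meas.mono hle).aestronglyMeasurable
  rw [memLp_two_iff_integrable_sq hm1sm]
  have hAint : Integrable A μ := integrable_condExp
  refine Integrable.mono (hAint.div_const ε) ((hm1meas.mono hle).pow 2).aestronglyMeasurable ?_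
  filter_upwards [hbound, hAnn] with ω h1 h2
  rw [Real.norm_eq_abs, Real.norm_eq_abs, abs_of_nonneg (sq_nonneg _),
    abs_of_nonneg (div_nonneg h2 hε.le)]
  exact h1


lemma condExp_psi_sq [IsProbabilityMeasure μ] {m : MeasurableSpace Ω} (hle : m ≤ mΩ)
    (D Y m1 m0 v1 v0 pX α : Ω → ℝ)
    (hD : Measurable[mΩ] D) (hD01 : ∀ ω, D ω = 0 ∨ D ω = 1)
    (hYm : Measurable[mΩ] Y) (hY2 : MemLp Y 2 μ)
    (hm1meas : StronglyMeasurable[m] m1) (hm0meas : StronglyMeasurable[m] m0)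
    (hm1L2 : MemLp m1 2 μ) (hm0L2 : MemLp m0 2 μ)
    (hαmeas : StronglyMeasurable[m] α)
    {ε : ℝ} (hε : 0 < ε) (hαb : ∀ ω, ε ≤ α ω ∧ α ω ≤ 1 - ε)
    (hpX : pX =ᵐ[μ] μ[D | m])
    (hm1c : μ[fun ω => D ω * Y ω | m] =ᵐ[μ] fun ω => pX ω * m1 ω)
    (hm0c : μ[fun ω => (1 - D ω) * Y ω | m] =ᵐ[μ] fun ω => (1 - pX ω) * m0 ω)
    (hv1c : μ[fun ω => D ω * (Y ω - m1 ω) ^ 2 | m] =ᵐ[μ] fun ω => pX ω * v1 ω)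
    (hv0c : μ[fun ω => (1 - D ω) * (Y ω - m0 ω) ^ 2 | m] =ᵐ[μ] fun ω => (1 - pX ω) * v0 ω) :
    μ[fun ω => (D ω * (Y ω - m1 ω) / α ω - (1 - D ω) * (Y ω - m0 ω) / (1 - α ω)
        + m1 ω - m0 ω) ^ 2 | m]
      =ᵐ[μ] fun ω => pX ω * v1 ω / α ω ^ 2 + (1 - pX ω) * v0 ω / (1 - α ω) ^ 2
        + (m1 ω - m0 ω) ^ 2 := by
  have hαpos : ∀ ω, 0 < α ω := fun ω => lt_of_lt_of_le hε (hαb ω).1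
  have h1αpos : ∀ ω, 0 < 1 - α ω := fun ω => by nlinarith [(hαb ω).2]
  have hαne : ∀ ω, α ω ≠ 0 := fun ω => (hαpos ω).ne'
  have h1αne : ∀ ω, (1:ℝ) - α ω ≠ 0 := fun ω => (h1αpos ω).ne'
  have hDbdd : ∃ C, ∀ x, ‖D x‖ ≤ C := by
    refine ⟨1, fun x => ?_⟩; rcases hD01 x with h | h <;> simp [h]
  have h1Dbdd : ∃ C, ∀ x, ‖1 - D x‖ ≤ C := by
    refine ⟨1, fun x => ?_⟩; rcases hD01 x with h | h <;> simp [h]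
  have hDaesm : AEStronglyMeasurable[mΩ] D μ := hD.aestronglyMeasurable
  have h1Dm : Measurable[mΩ] (fun ω => 1 - D ω) := measurable_const.sub hD
  have h1Daesm : AEStronglyMeasurable[mΩ] (fun ω => 1 - D ω) μ := h1Dm.aestronglyMeasurable
  have hm1m : Measurable[mΩ] m1 := (hm1meas.mono hle).measurable
  have hm0m : Measurable[mΩ] m0 := (hm0meas.mono hle).measurable
  have hαm0 : Measurable[m] α := hαmeas.measurable
  have hαmΩ : Measurable[mΩ] α := hαm0.mono hle le_rfl
  -- MemLp pieces
  have hYm1 : MemLp (fun ω => Y ω - m1 ω) 2 μ := hY2.sub hm1L2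
  have hYm0 : MemLp (fun ω => Y ω - m0 ω) 2 μ := hY2.sub hm0L2
  have hm10 : MemLp (fun ω => m1 ω - m0 ω) 2 μ := hm1L2.sub hm0L2
  -- base integrable functions
  set f1 : Ω → ℝ := fun ω => D ω * (Y ω - m1 ω) ^ 2 with hf1def
  set f2 : Ω → ℝ := fun ω => (1 - D ω) * (Y ω - m0 ω) ^ 2 with hf2def
  set g1 : Ω → ℝ := fun ω => D ω * (Y ω - m1 ω) with hg1def
  set g2 : Ω → ℝ := fun ω => (1 - D ω) * (Y ω - m0 ω) with hg2def
  have hf1int : Integrable f1 μ :=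
    ((memLp_two_iff_integrable_sq hYm1.aestronglyMeasurable).mp hYm1).bdd_mul hDaesm (ae_of_all _ hDbdd.choose_spec)
  have hf2int : Integrable f2 μ :=
    ((memLp_two_iff_integrable_sq hYm0.aestronglyMeasurable).mp hYm0).bdd_mul h1Daesm (ae_of_all _ h1Dbdd.choose_spec)
  have hg1int : Integrable g1 μ := (hYm1.integrable one_le_two).bdd_mul hDaesm (ae_of_all _ hDbdd.choose_spec)
  have hg2int : Integrable g2 μ := (hYm0.integrable one_le_two).bdd_mul h1Daesm (ae_of_all _ h1Dbdd.choose_spec)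
  -- m-measurable coefficients
  set c1 : Ω → ℝ := fun ω => 1 / α ω ^ 2 with hc1def
  set c2 : Ω → ℝ := fun ω => 1 / (1 - α ω) ^ 2 with hc2def
  set c3 : Ω → ℝ := fun ω => 2 * (m1 ω - m0 ω) / α ω with hc3def
  set c4 : Ω → ℝ := fun ω => -(2 * (m1 ω - m0 ω)) / (1 - α ω) with hc4def
  set h2 : Ω → ℝ := fun ω => (m1 ω - m0 ω) ^ 2 with hh2def
  have hc1sm : StronglyMeasurable[m] c1 :=
    (measurable_const.div (hαm0.pow_const 2)).stronglyMeasurable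
  have hc2sm : StronglyMeasurable[m] c2 :=
    (measurable_const.div ((measurable_const.sub hαm0).pow_const 2)).stronglyMeasurable
  have hc3sm : StronglyMeasurable[m] c3 :=
    ((measurable_const.mul (hm1meas.measurable.sub hm0meas.measurable)).div hαm0).stronglyMeasurable
  have hc4sm : StronglyMeasurable[m] c4 :=
    (((measurable_const.mul (hm1meas.measurable.sub
      hm0meas.measurable)).neg).div (measurable_const.sub hαm0)).stronglyMeasurable
  have hh2sm : StronglyMeasurable[m] h2 :=
    ((hm1meas.measurable.sub hm0meas.measurable).pow_const 2).stronglyMeasurable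
  -- bounds on c1, c2
  have hc1bdd : ∃ C, ∀ x, ‖c1 x‖ ≤ C := by
    refine ⟨1 / ε ^ 2, fun x => ?_⟩
    rw [Real.norm_eq_abs, abs_of_nonneg (by positivity)]
    apply one_div_le_one_div_of_le (by positivity)
    nlinarith [(hαb x).1]
  have hc2bdd : ∃ C, ∀ x, ‖c2 x‖ ≤ C := by
    refine ⟨1 / ε ^ 2, fun x => ?_⟩
    rw [Real.norm_eq_abs, abs_of_nonneg (by positivity)]
    apply one_div_le_one_div_of_le (by positivity)
    nlinarith [(hαb x).2, h1αpos x]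
  -- integrability of the five terms
  have hT1 : Integrable (c1 * f1) μ :=
    hf1int.bdd_mul ((hc1sm.mono hle).aestronglyMeasurable) (ae_of_all _ hc1bdd.choose_spec)
  have hT2 : Integrable (c2 * f2) μ :=
    hf2int.bdd_mul ((hc2sm.mono hle).aestronglyMeasurable) (ae_of_all _ hc2bdd.choose_spec)
  have hg1m : Measurable[mΩ] g1 := hD.mul (hYm.sub hm1m)
  have hg2m : Measurable[mΩ] g2 := h1Dm.mul (hYm.sub hm0m)
  have habs_base : Integrable (fun ω => (2/ε) * |(m1 ω - m0 ω) * (Y ω - m1 ω)|) μ :=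
    ((int_mul hm10 hYm1).abs).const_mul (2/ε)
  have habs_base' : Integrable (fun ω => (2/ε) * |(m1 ω - m0 ω) * (Y ω - m0 ω)|) μ :=
    ((int_mul hm10 hYm0).abs).const_mul (2/ε)
  have hT3 : Integrable (c3 * g1) μ := by
    refine Integrable.mono habs_base
      (((hc3sm.mono hle).aestronglyMeasurable).mul hg1m.aestronglyMeasurable) ?_
    filter_upwards with ω
    have h1 : (c3 * g1) ω = (2 * D ω / α ω) * ((m1 ω - m0 ω) * (Y ω - m1 ω)) := by
      simp only [Pi.mul_apply, hc3def, hg1def]; ring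
    rw [Real.norm_eq_abs, Real.norm_eq_abs, h1, abs_mul,
      abs_of_nonneg (by positivity : (0:ℝ) ≤ 2/ε * |(m1 ω - m0 ω) * (Y ω - m1 ω)|)]
    apply mul_le_mul_of_nonneg_right _ (abs_nonneg _)
    rw [abs_div, abs_of_pos (hαpos ω)]
    apply div_le_div₀ (by positivity) ?_ hε (hαb ω).1
    rcases hD01 ω with h | h <;> simp [h] <;> norm_num
  have hT4 : Integrable (c4 * g2) μ := by
    refine Integrable.mono habs_base'
      (((hc4sm.mono hle).aestronglyMeasurable).mul hg2m.aestronglyMeasurable) ?_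
    filter_upwards with ω
    have h1 : (c4 * g2) ω = (-(2 * (1 - D ω)) / (1 - α ω)) * ((m1 ω - m0 ω) * (Y ω - m0 ω)) := by
      simp only [Pi.mul_apply, hc4def, hg2def]; ring
    rw [Real.norm_eq_abs, Real.norm_eq_abs, h1, abs_mul,
      abs_of_nonneg (by positivity : (0:ℝ) ≤ 2/ε * |(m1 ω - m0 ω) * (Y ω - m0 ω)|)]
    apply mul_le_mul_of_nonneg_right _ (abs_nonneg _)
    rw [abs_div, abs_of_pos (h1αpos ω)]
    apply div_le_div₀ (by positivity) ?_ hε (by nlinarith [(hαb ω).2])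
    rcases hD01 ω with h | h <;> simp [h] <;> norm_num
  have hT5 : Integrable h2 μ := by
    have := int_mul hm10 hm10
    refine this.congr ?_
    filter_upwards with ω
    simp only [hh2def]; ring
  -- pointwise decomposition
  have hdec : (fun ω => (D ω * (Y ω - m1 ω) / α ω - (1 - D ω) * (Y ω - m0 ω) / (1 - α ω)
      + m1 ω - m0 ω) ^ 2) = c1 * f1 + c2 * f2 + c3 * g1 + c4 * g2 + h2 := by
    funext ω
    simp only [Pi.add_apply, Pi.mul_apply, hc1def, hc2def, hc3def, hc4def, hh2def, hf1def,
      hf2def, hg1def, hg2def]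
    have ha := hαne ω
    have hb := h1αne ω
    rcases hD01 ω with h | h <;> rw [h] <;> field_simp <;> ring
  -- conditional expectations of the base functions
  have hDint : Integrable D μ := by
    refine (integrable_const (1:ℝ)).bdd_mul hDaesm (ae_of_all _ hDbdd.choose_spec) |>.congr ?_
    filter_upwards with ω; ring
  have hDYint : Integrable (fun ω => D ω * Y ω) μ :=
    (hY2.integrable one_le_two).bdd_mul hDaesm (ae_of_all _ hDbdd.choose_spec)
  have h1DYint : Integrable (fun ω => (1 - D ω) * Y ω) μ :=
    (hY2.integrable one_le_two).bdd_mul h1Daesm (ae_of_all _ h1Dbdd.choose_spec)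
  have hm1Dint : Integrable (m1 * D) μ := by
    refine ((hm1L2.integrable one_le_two).bdd_mul hDaesm (ae_of_all _ hDbdd.choose_spec)).congr ?_
    filter_upwards with ω; simp [Pi.mul_apply, mul_comm]
  have hm01Dint : Integrable (m0 * fun ω => 1 - D ω) μ := by
    refine ((hm0L2.integrable one_le_two).bdd_mul h1Daesm (ae_of_all _ h1Dbdd.choose_spec)).congr ?_
    filter_upwards with ω; simp [Pi.mul_apply, mul_comm]
  -- conditional expectation of g1 is 0
  have hg1z : μ[g1 | m] =ᵐ[μ] 0 := by
    have hdec1 : g1 = (fun ω => D ω * Y ω) - m1 * D := by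
      funext ω; simp only [Pi.sub_apply, Pi.mul_apply, hg1def]; ring
    rw [hdec1]
    refine (condExp_sub hDYint hm1Dint _).trans ?_
    have hpull : μ[m1 * D | m] =ᵐ[μ] m1 * μ[D | m] :=
      condExp_mul_of_stronglyMeasurable_left hm1meas hm1Dint hDint
    filter_upwards [hm1c, hpull, hpX] with ω e1 e2 e3
    simp only [Pi.sub_apply, Pi.mul_apply, Pi.zero_apply, e1, e2, ← e3]
    ring
  -- conditional expectation of g2 is 0
  have hg2z : μ[g2 | m] =ᵐ[μ] 0 := by
    have hdec2 : g2 = (fun ω => (1 - D ω) * Y ω) - m0 * fun ω => 1 - D ω := by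
      funext ω; simp only [Pi.sub_apply, Pi.mul_apply, hg2def]; ring
    rw [hdec2]
    refine (condExp_sub h1DYint hm01Dint _).trans ?_
    have hpull : μ[m0 * fun ω => 1 - D ω | m] =ᵐ[μ] m0 * μ[fun ω => 1 - D ω | m] :=
      condExp_mul_of_stronglyMeasurable_left hm0meas hm01Dint (by
        refine (integrable_const (1:ℝ)).bdd_mul h1Daesm (ae_of_all _ h1Dbdd.choose_spec) |>.congr ?_
        filter_upwards with ω; ring)
    have h1Dc : μ[fun ω => 1 - D ω | m] =ᵐ[μ] fun ω => 1 - (μ[D | m]) ω := by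
      have : (fun ω => 1 - D ω) = (fun _ => (1:ℝ)) - D := rfl
      rw [this]
      refine (condExp_sub (integrable_const 1) hDint _).trans ?_
      rw [condExp_const hle (1:ℝ)]
      filter_upwards with ω; simp
    filter_upwards [hm0c, hpull, h1Dc, hpX] with ω e1 e2 e3 e4
    simp only [Pi.sub_apply, Pi.mul_apply, Pi.zero_apply, e1, e2, e3, ← e4]
    ring
  -- conditional expectations of the five terms
  have e1 : μ[c1 * f1 | m] =ᵐ[μ] fun ω => c1 ω * (pX ω * v1 ω) := by
    refine (condExp_mul_of_stronglyMeasurable_left hc1sm hT1 hf1int).trans ?_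
    filter_upwards [hv1c] with ω h
    simp only [Pi.mul_apply, h]
  have e2 : μ[c2 * f2 | m] =ᵐ[μ] fun ω => c2 ω * ((1 - pX ω) * v0 ω) := by
    refine (condExp_mul_of_stronglyMeasurable_left hc2sm hT2 hf2int).trans ?_
    filter_upwards [hv0c] with ω h
    simp only [Pi.mul_apply, h]
  have e3 : μ[c3 * g1 | m] =ᵐ[μ] fun _ => (0:ℝ) := by
    refine (condExp_mul_of_stronglyMeasurable_left hc3sm hT3 hg1int).trans ?_
    filter_upwards [hg1z] with ω h
    simp only [Pi.mul_apply, h, Pi.zero_apply, mul_zero]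
  have e4 : μ[c4 * g2 | m] =ᵐ[μ] fun _ => (0:ℝ) := by
    refine (condExp_mul_of_stronglyMeasurable_left hc4sm hT4 hg2int).trans ?_
    filter_upwards [hg2z] with ω h
    simp only [Pi.mul_apply, h, Pi.zero_apply, mul_zero]
  have e5 : μ[h2 | m] = h2 := condExp_of_stronglyMeasurable hle hh2sm hT5
  -- combine
  rw [hdec]
  have Hsum : μ[c1 * f1 + c2 * f2 + c3 * g1 + c4 * g2 + h2 | m]
      =ᵐ[μ] μ[c1 * f1 | m] + μ[c2 * f2 | m] + μ[c3 * g1 | m] + μ[c4 * g2 | m] + μ[h2 | m] := by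
    refine (condExp_add (((hT1.add hT2).add hT3).add hT4) hT5 _).trans ?_
    refine EventuallyEq.add ?_ EventuallyEq.rfl
    refine (condExp_add ((hT1.add hT2).add hT3) hT4 _).trans ?_
    refine EventuallyEq.add ?_ EventuallyEq.rfl
    refine (condExp_add (hT1.add hT2) hT3 _).trans ?_
    refine EventuallyEq.add ?_ EventuallyEq.rfl
    exact condExp_add hT1 hT2 _
  refine Hsum.trans ?_
  rw [e5]
  filter_upwards [e1, e2, e3, e4] with ω k1 k2 k3 k4
  simp only [Pi.add_apply, k1, k2, k3, k4]
  simp only [hh2def, hc1def, hc2def]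
  ring


end VarDiffAuxSection

/-- **Variance difference with a misspecified propensity score.**
Let `Ψ₁ = D(Y-m₁(X))/p(X) - (1-D)(Y-m₀(X))/(1-p(X)) + m₁(X) - m₀(X)` and `Ψ₂` the same with
`p(X)` replaced by a misspecified `p̃(X) ∈ (ε, 1-ε)`.  Then, under unconfoundedness and square
integrability,
`E[Ψ₂²|X] - E[Ψ₁²|X] = ((p(X)² - p̃(X)²)/(p̃(X)² p(X)))·Var(Y|X,D=1)
  + (((1-p(X))² - (1-p̃(X))²)/((1-p̃(X))²(1-p(X))))·Var(Y|X,D=0)`.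
Here `m₁, m₀, v₁, v₀` (the conditional means and variances of `Y` given `X` on `D=1`, `D=0`)
are characterized by the conditional moment identities
`E[D·Y|X] = p(X)·m₁(X)`, `E[(1-D)·Y|X] = (1-p(X))·m₀(X)`,
`E[D·(Y-m₁(X))²|X] = p(X)·v₁(X)`, `E[(1-D)·(Y-m₀(X))²|X] = (1-p(X))·v₀(X)`. -/
theorem variance_difference_misspecified_ps
    {Ω E : Type*} [MeasurableSpace Ω] [StandardBorelSpace Ω] [Nonempty Ω]
    [mE : MeasurableSpace E]
    (μ : Measure Ω) [IsProbabilityMeasure μ]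
    (X : Ω → E) (hX : Measurable X)
    (D Y1 Y0 Y : Ω → ℝ)
    (hD : Measurable D) (hD01 : ∀ ω, D ω = 0 ∨ D ω = 1)
    (hY1m : Measurable Y1) (hY0m : Measurable Y0)
    (hY1 : MemLp Y1 2 μ) (hY0 : MemLp Y0 2 μ)
    (hY : ∀ ω, Y ω = D ω * Y1 ω + (1 - D ω) * Y0 ω)
    (hUnconf : CondIndepFun (MeasurableSpace.comap X mE) hX.comap_le
      (fun ω => (Y1 ω, Y0 ω)) D μ)
    -- true propensity score and misspecified propensity score, both in (ε, 1-ε)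
    (pX : Ω → ℝ)
    (hpX : pX =ᵐ[μ] μ[D | MeasurableSpace.comap X mE])
    (ptilde : E → ℝ) (hptilde : Measurable ptilde)
    (ε : ℝ) (hε : 0 < ε)
    (hpb : ∀ ω, ε ≤ pX ω ∧ pX ω ≤ 1 - ε)
    (hpb' : ∀ x, ε ≤ ptilde x ∧ ptilde x ≤ 1 - ε)
    -- conditional means m₁(X) = E[Y|X,D=1], m₀(X) = E[Y|X,D=0]
    (m1 m0 v1 v0 : Ω → ℝ)
    (hm1meas : StronglyMeasurable[MeasurableSpace.comap X mE] m1)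
    (hm0meas : StronglyMeasurable[MeasurableSpace.comap X mE] m0)
    (hv1meas : StronglyMeasurable[MeasurableSpace.comap X mE] v1)
    (hv0meas : StronglyMeasurable[MeasurableSpace.comap X mE] v0)
    (hm1 : μ[fun ω => D ω * Y ω | MeasurableSpace.comap X mE]
      =ᵐ[μ] fun ω => pX ω * m1 ω)
    (hm0 : μ[fun ω => (1 - D ω) * Y ω | MeasurableSpace.comap X mE]
      =ᵐ[μ] fun ω => (1 - pX ω) * m0 ω)
    -- conditional variances v₁ = Var(Y|X,D=1), v₀ = Var(Y|X,D=0)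
    (hv1 : μ[fun ω => D ω * (Y ω - m1 ω) ^ 2 | MeasurableSpace.comap X mE]
      =ᵐ[μ] fun ω => pX ω * v1 ω)
    (hv0 : μ[fun ω => (1 - D ω) * (Y ω - m0 ω) ^ 2 | MeasurableSpace.comap X mE]
      =ᵐ[μ] fun ω => (1 - pX ω) * v0 ω) :
    (fun ω =>
        (μ[fun ω' => (D ω' * (Y ω' - m1 ω') / ptilde (X ω')
              - (1 - D ω') * (Y ω' - m0 ω') / (1 - ptilde (X ω'))
              + m1 ω' - m0 ω') ^ 2 | MeasurableSpace.comap X mE]) ω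
        - (μ[fun ω' => (D ω' * (Y ω' - m1 ω') / pX ω'
              - (1 - D ω') * (Y ω' - m0 ω') / (1 - pX ω')
              + m1 ω' - m0 ω') ^ 2 | MeasurableSpace.comap X mE]) ω)
      =ᵐ[μ] fun ω =>
        ((pX ω ^ 2 - ptilde (X ω) ^ 2) / (ptilde (X ω) ^ 2 * pX ω)) * v1 ω
          + (((1 - pX ω) ^ 2 - (1 - ptilde (X ω)) ^ 2)
              / ((1 - ptilde (X ω)) ^ 2 * (1 - pX ω))) * v0 ω := by
  classical
  have hle := hX.comap_le
  -- measurability and L² of Y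
  have hYm : Measurable Y := by
    have hYe : Y = fun ω => D ω * Y1 ω + (1 - D ω) * Y0 ω := funext hY
    rw [hYe]
    exact (hD.mul hY1m).add ((measurable_const.sub hD).mul hY0m)
  have hY2 : MemLp Y 2 μ := by
    refine MemLp.of_le (hY1.norm.add hY0.norm) hYm.aestronglyMeasurable ?_
    filter_upwards with ω
    simp only [Pi.add_apply, Real.norm_eq_abs]
    rw [abs_of_nonneg (by positivity : (0:ℝ) ≤ |Y1 ω| + |Y0 ω|), hY ω]
    rcases hD01 ω with h | h
    · have he : D ω * Y1 ω + (1 - D ω) * Y0 ω = Y0 ω := by rw [h]; ring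
      rw [he]; exact le_add_of_nonneg_left (abs_nonneg _)
    · have he : D ω * Y1 ω + (1 - D ω) * Y0 ω = Y1 ω := by rw [h]; ring
      rw [he]; exact le_add_of_nonneg_right (abs_nonneg _)
  -- L² of m1 and m0
  have hm1L2 : MemLp m1 2 μ :=
    memL2_ratio hle hD hD01 hYm hY2 hm1meas hpX hε (fun ω => (hpb ω).1) hm1
  have hm0L2 : MemLp m0 2 μ := by
    have h1Dc : μ[fun ω => 1 - D ω | MeasurableSpace.comap X mE] =ᵐ[μ] fun ω => 1 - (μ[D | MeasurableSpace.comap X mE]) ω := by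
      have he : (fun ω => 1 - D ω) = (fun _ => (1:ℝ)) - D := rfl
      rw [he]
      have hDint : Integrable D μ := by
        refine (integrable_const (1:ℝ)).bdd_mul hD.aestronglyMeasurable
          (c := 1) (ae_of_all _ fun x => by rcases hD01 x with h | h <;> simp [h]) |>.congr ?_
        filter_upwards with ω; ring
      refine (condExp_sub (integrable_const 1) hDint _).trans ?_
      rw [condExp_const hle (1:ℝ)]
      filter_upwards with ω; simp
    refine memL2_ratio hle (measurable_const.sub hD)
      (fun ω => by rcases hD01 ω with h | h <;> simp [h])
      hYm hY2 hm0meas (pX := fun ω => 1 - pX ω) ?_ hε (fun ω => by show ε ≤ 1 - pX ω; linarith [(hpb ω).2]) hm0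
    filter_upwards [hpX, h1Dc] with ω h1 h2
    rw [h1]; exact h2.symm
  -- the clamped, m-measurable version of pX
  set p' : Ω → ℝ := fun ω => max ε (min (1 - ε) ((μ[D | MeasurableSpace.comap X mE]) ω)) with hp'def
  have hεle : ε ≤ 1 - ε := by
    have := hpb (Classical.arbitrary Ω); linarith [this.1, this.2]
  have hp'sm : StronglyMeasurable[MeasurableSpace.comap X mE] p' :=
    (measurable_const.max (measurable_const.min stronglyMeasurable_condExp.measurable)
      ).stronglyMeasurable
  have hp'b : ∀ ω, ε ≤ p' ω ∧ p' ω ≤ 1 - ε := fun ω =>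
    ⟨le_max_left _ _, max_le hεle (min_le_left _ _)⟩
  have hp'ae : pX =ᵐ[μ] p' := by
    filter_upwards [hpX] with ω h
    have h1 := hpb ω
    simp only [hp'def, ← h]
    rw [min_eq_right h1.2, max_eq_right h1.1]
  -- the two conditional second moments
  have hXm : Measurable[MeasurableSpace.comap X mE] X := Measurable.of_comap_le le_rfl
  have E2 : μ[fun ω' => (D ω' * (Y ω' - m1 ω') / ptilde (X ω')
        - (1 - D ω') * (Y ω' - m0 ω') / (1 - ptilde (X ω'))
        + m1 ω' - m0 ω') ^ 2 | MeasurableSpace.comap X mE]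
      =ᵐ[μ] fun ω => pX ω * v1 ω / ptilde (X ω) ^ 2
        + (1 - pX ω) * v0 ω / (1 - ptilde (X ω)) ^ 2 + (m1 ω - m0 ω) ^ 2 :=
    condExp_psi_sq hle D Y m1 m0 v1 v0 pX (fun ω => ptilde (X ω)) hD hD01 hYm hY2
      hm1meas hm0meas hm1L2 hm0L2 ((hptilde.comp hXm).stronglyMeasurable) hε
      (fun ω => hpb' (X ω)) hpX hm1 hm0 hv1 hv0
  have E1 : μ[fun ω' => (D ω' * (Y ω' - m1 ω') / p' ω'
        - (1 - D ω') * (Y ω' - m0 ω') / (1 - p' ω')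
        + m1 ω' - m0 ω') ^ 2 | MeasurableSpace.comap X mE]
      =ᵐ[μ] fun ω => pX ω * v1 ω / p' ω ^ 2
        + (1 - pX ω) * v0 ω / (1 - p' ω) ^ 2 + (m1 ω - m0 ω) ^ 2 :=
    condExp_psi_sq hle D Y m1 m0 v1 v0 pX p' hD hD01 hYm hY2
      hm1meas hm0meas hm1L2 hm0L2 hp'sm hε hp'b hpX hm1 hm0 hv1 hv0
  have Hcongr : μ[fun ω' => (D ω' * (Y ω' - m1 ω') / pX ω'
        - (1 - D ω') * (Y ω' - m0 ω') / (1 - pX ω')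
        + m1 ω' - m0 ω') ^ 2 | MeasurableSpace.comap X mE]
      =ᵐ[μ] μ[fun ω' => (D ω' * (Y ω' - m1 ω') / p' ω'
        - (1 - D ω') * (Y ω' - m0 ω') / (1 - p' ω')
        + m1 ω' - m0 ω') ^ 2 | MeasurableSpace.comap X mE] := by
    refine condExp_congr_ae ?_
    filter_upwards [hp'ae] with ω h
    rw [h]
  filter_upwards [E2, E1, Hcongr, hp'ae] with ω k2 k1 kc kp
  rw [k2, kc, k1, ← kp]
  have h1 := hpb ω
  have h2 := hpb' (X ω)
  have hne1 : pX ω ≠ 0 := by nlinarith [h1.1]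
  have hne2 : (1:ℝ) - pX ω ≠ 0 := by nlinarith [h1.2]
  have hne3 : ptilde (X ω) ≠ 0 := by nlinarith [h2.1]
  have hne4 : (1:ℝ) - ptilde (X ω) ≠ 0 := by nlinarith [h2.2]
  field_simp
  ring
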